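/- Key step of the convexity theorem: let R be a convex set of events on vertex set V containing a source-incompatible set, and let H₁, H₂ ∈ R. Define H'₁ = H₁ ∪ {(s,t) ∈ H₂ | t ∉ B(H₂)}. Then H'₁ ∈ R and H₁ and H'₁ have the same sets of incoming arcs at every vertex of B(H₂): for all t ∈ B(H₂), {(s,t) ∈ H₁} = {(s,t) ∈ H'₁}. -/

import Mathlib

/-- The set of sources of an event (a set of arcs on `V`). -/
def sources {V : Type*} (H : Set (V × V)) : Set V :=
  {u | ∀ v : V, Relation.ReflTransGen (fun s t => (s, t) ∈ H) u v}

/-- A set of events is convex if adding to an event any single arc of another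
event yields an event of the set. -/
def ConvexEvents {V : Type*} (R : Set (Set (V × V))) : Prop :=
  ∀ H ∈ R, ∀ H' ∈ R, ∀ a ∈ H', insert a H ∈ R

theorem convexity_key_step {V : Type*} [Fintype V]
    (R : Set (Set (V × V))) (hconv : ConvexEvents R)
    -- R contains a source-incompatible set
    (hinc : ∃ D : Finset (Set (V × V)), ↑D ⊆ R ∧ D.Nonempty ∧
      (∀ H ∈ D, (sources H).Nonempty) ∧ (⋂ H ∈ D, sources H) = ∅)
    (H₁ H₂ : Set (V × V)) (h₁ : H₁ ∈ R) (h₂ : H₂ ∈ R) :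
    (H₁ ∪ {a ∈ H₂ | a.2 ∉ sources H₂}) ∈ R ∧
    (∀ t ∈ sources H₂, ∀ s : V,
      ((s, t) ∈ H₁ ↔ (s, t) ∈ H₁ ∪ {a ∈ H₂ | a.2 ∉ sources H₂})) := by
  have key : ∀ S : Set (V × V), S ⊆ H₂ → H₁ ∪ S ∈ R := by
    intro S hS
    have hfin : S.Finite := Set.toFinite S
    revert hS
    refine Set.Finite.induction_on (motive := fun S _ => S ⊆ H₂ → H₁ ∪ S ∈ R) S hfin (fun _ => by simpa using h₁) ?_
    intro a s _ _ ih hS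
    have : H₁ ∪ insert a s = insert a (H₁ ∪ s) := by
      ext x; simp [or_comm, or_assoc, or_left_comm]
    rw [this]
    exact hconv _ (ih (fun x hx => hS (Set.mem_insert_of_mem a hx))) _ h₂ _
      (hS (Set.mem_insert a s))
  refine ⟨key _ (Set.sep_subset _ _), ?_⟩
  intro t ht s
  constructor
  · intro h; exact Or.inl h
  · rintro (h | ⟨_, h2⟩)
    · exact h
    · exact absurd ht h2
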